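/- For all integers M ≥ 0 and 1 ≤ n ≤ M+1: ∑_{x_1=1}^{M+1} ⋯ ∑_{x_n=1}^{M+1} ∏_{i=1}^{n} 1/((M+x_i)! (M+1−x_i)!) · (∏_{1≤i<j≤n} ((x_i − 1/2)^2 − (x_j − 1/2)^2))^2 = n! · 2^{2Mn} · ∏_{j=0}^{n−1} (2j)! / (2^{4j} (2(M−j)+1)!). -/

import Mathlib

open Finset

open Polynomial
open scoped fwdDiff



lemma coeff_comp_X_add_one (p : Polynomial ℝ) (j : ℕ) :
    (p.comp (X + 1)).coeff j = ∑ i ∈ range (p.natDegree + 1), p.coeff i * (i.choose j) := by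
  conv_lhs => rw [p.as_sum_range' (p.natDegree + 1) (Nat.lt_succ_self _), Polynomial.sum_comp]
  rw [Polynomial.finset_sum_coeff]
  refine Finset.sum_congr rfl fun i _ => ?_
  rw [monomial_comp, coeff_C_mul, Polynomial.coeff_X_add_one_pow]

/-- the discrete derivative of a polynomial evaluation map -/
lemma fwdDiff_eval (p : Polynomial ℝ) :
    Δ_[(1:ℤ)] (fun k : ℤ => p.eval (k : ℝ)) =
      fun k : ℤ => (p.comp (X + 1) - p).eval (k : ℝ) := by
  funext k
  simp [fwdDiff, Polynomial.eval_comp]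

lemma step_coeff (p : Polynomial ℝ) (m : ℕ) (hp : p.natDegree ≤ m + 1) (j : ℕ) (hj : m ≤ j) :
    (p.comp (X + 1) - p).coeff j =
      if j = m then ((m:ℝ) + 1) * p.coeff (m + 1) else 0 := by
  rw [Polynomial.coeff_sub, coeff_comp_X_add_one]
  have hsub : range (p.natDegree + 1) ⊆ range (m + 2) := by
    apply Finset.range_subset_range.2; omega
  rw [Finset.sum_subset hsub (fun i _ hi => by
    have : p.coeff i = 0 := by
      apply Polynomial.coeff_eq_zero_of_natDegree_lt
      simp only [Finset.mem_range] at hi ⊢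
      omega
    simp [this])]
  rcases eq_or_ne j m with rfl | hne
  · rw [Finset.sum_range_succ, Finset.sum_range_succ]
    have h0 : ∀ i ∈ range j, p.coeff i * (i.choose j : ℝ) = 0 := fun i hi => by
      simp only [Finset.mem_range] at hi
      rw [Nat.choose_eq_zero_of_lt hi]; simp
    rw [Finset.sum_eq_zero h0]
    simp [Nat.choose_succ_self_right]
    ring
  · have hjm : m + 1 ≤ j := by omega
    simp only [hne, if_false]
    have h0 : ∀ i ∈ range (m + 2), i ≠ j → p.coeff i * (i.choose j : ℝ) = 0 := fun i hi hij => by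
      simp only [Finset.mem_range] at hi
      rcases lt_or_ge i j with h | h
      · rw [Nat.choose_eq_zero_of_lt h]; simp
      · exfalso; omega
    rcases lt_or_ge j (m + 2) with h | h
    · rw [Finset.sum_eq_single_of_mem j (Finset.mem_range.2 h) h0]
      simp [Nat.choose_self]
    · rw [Finset.sum_eq_zero (fun i hi => h0 i hi (by simp only [Finset.mem_range] at hi; omega))]
      have : p.coeff j = 0 := Polynomial.coeff_eq_zero_of_natDegree_lt (by omega)
      simp [this]

lemma fwdDiff_iter_eval (m : ℕ) (p : Polynomial ℝ) (hp : p.natDegree ≤ m) :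
    (Δ_[(1:ℤ)])^[m] (fun k : ℤ => p.eval (k : ℝ)) = fun _ => (m.factorial : ℝ) * p.coeff m := by
  induction m generalizing p with
  | zero =>
    funext k
    simp only [Function.iterate_zero, id_eq, Nat.factorial_zero, Nat.cast_one, one_mul]
    rw [Polynomial.eq_C_of_natDegree_le_zero hp]
    simp
  | succ m ih =>
    rw [Function.iterate_succ_apply, fwdDiff_eval]
    set q := p.comp (X + 1) - p with hq
    have hqd : q.natDegree ≤ m := by
      apply Polynomial.natDegree_le_iff_coeff_eq_zero.2
      intro j hj
      rw [step_coeff p m hp j (by omega), if_neg (by omega)]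
    rw [ih q hqd]
    have : q.coeff m = ((m:ℝ) + 1) * p.coeff (m + 1) := by
      rw [step_coeff p m hp m le_rfl, if_pos rfl]
    rw [this]
    funext k
    push_cast [Nat.factorial_succ]
    ring

lemma andreief {α : Type*} [Fintype α] [DecidableEq α] (n : ℕ) (w : α → ℝ)
    (φ : Fin n → α → ℝ) :
    ∑ x : Fin n → α, (∏ i, w (x i)) * (Matrix.det (Matrix.of fun i j : Fin n => φ j (x i)))^2
    = (n.factorial : ℝ) *
        Matrix.det (Matrix.of fun a b : Fin n => ∑ s : α, w s * φ a s * φ b s) := by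
  have hdet : ∀ x : Fin n → α, Matrix.det (Matrix.of fun i j : Fin n => φ j (x i)) =
      ∑ σ : Equiv.Perm (Fin n), ((Equiv.Perm.sign σ : ℤ) : ℝ) * ∏ j, φ j (x (σ j)) := by
    intro x
    rw [Matrix.det_apply']
    rfl
  calc
    ∑ x : Fin n → α, (∏ i, w (x i)) * (Matrix.det (Matrix.of fun i j : Fin n => φ j (x i)))^2
      = ∑ x : Fin n → α, ∑ σ : Equiv.Perm (Fin n), ∑ τ : Equiv.Perm (Fin n),
          ((Equiv.Perm.sign σ : ℤ) : ℝ) * ((Equiv.Perm.sign τ : ℤ) : ℝ) *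
            ∏ i, (w (x i) * φ (σ⁻¹ i) (x i) * φ (τ⁻¹ i) (x i)) := by
      refine Finset.sum_congr rfl fun x _ => ?_
      rw [hdet, sq, Finset.sum_mul_sum, Finset.mul_sum]
      refine Finset.sum_congr rfl fun σ _ => ?_
      rw [Finset.mul_sum]
      refine Finset.sum_congr rfl fun τ _ => ?_
      have hσ : ∏ j, φ j (x (σ j)) = ∏ i, φ (σ⁻¹ i) (x i) := by
        rw [← Equiv.prod_comp σ (fun i => φ (σ⁻¹ i) (x i))]
        simp
      have hτ : ∏ j, φ j (x (τ j)) = ∏ i, φ (τ⁻¹ i) (x i) := by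
        rw [← Equiv.prod_comp τ (fun i => φ (τ⁻¹ i) (x i))]
        simp
      rw [hσ, hτ, Finset.prod_mul_distrib, Finset.prod_mul_distrib]
      ring
    _ = ∑ σ : Equiv.Perm (Fin n), ∑ τ : Equiv.Perm (Fin n),
          ((Equiv.Perm.sign σ : ℤ) : ℝ) * ((Equiv.Perm.sign τ : ℤ) : ℝ) *
            ∏ i, (∑ s : α, w s * φ (σ⁻¹ i) s * φ (τ⁻¹ i) s) := by
      rw [Finset.sum_comm]
      refine Finset.sum_congr rfl fun σ _ => ?_
      rw [Finset.sum_comm]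
      refine Finset.sum_congr rfl fun τ _ => ?_
      rw [← Finset.mul_sum]
      congr 1
      rw [Finset.prod_univ_sum (fun _ => (univ : Finset α))]
      rw [Fintype.piFinset_univ]
    _ = ∑ σ : Equiv.Perm (Fin n), ∑ τ : Equiv.Perm (Fin n),
          ((Equiv.Perm.sign σ : ℤ) : ℝ) * ((Equiv.Perm.sign τ : ℤ) : ℝ) *
            ∏ i, (∑ s : α, w s * φ (σ i) s * φ (τ i) s) := by
      conv_rhs => rw [← Equiv.sum_comp (Equiv.inv (Equiv.Perm (Fin n)))]
      refine Finset.sum_congr rfl fun σ _ => ?_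
      conv_rhs => rw [← Equiv.sum_comp (Equiv.inv (Equiv.Perm (Fin n)))]
      refine Finset.sum_congr rfl fun τ _ => ?_
      simp [Equiv.Perm.sign_inv]
    _ = (n.factorial : ℝ) *
        Matrix.det (Matrix.of fun a b : Fin n => ∑ s : α, w s * φ a s * φ b s) := by
      rw [Finset.sum_comm]
      have hτ : ∀ τ : Equiv.Perm (Fin n),
          (∑ σ : Equiv.Perm (Fin n), ((Equiv.Perm.sign σ : ℤ) : ℝ) *
            ((Equiv.Perm.sign τ : ℤ) : ℝ) *
            ∏ i, (∑ s : α, w s * φ (σ i) s * φ (τ i) s))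
          = Matrix.det (Matrix.of fun a b : Fin n => ∑ s : α, w s * φ a s * φ b s) := by
        intro τ
        have hprod : ∀ σ : Equiv.Perm (Fin n),
            (∏ i, (∑ s : α, w s * φ (σ i) s * φ (τ i) s))
            = ∏ i, (∑ s : α, w s * φ (σ (τ⁻¹ i)) s * φ i s) := by
          intro σ
          rw [← Equiv.prod_comp τ (fun i => ∑ s : α, w s * φ (σ (τ⁻¹ i)) s * φ i s)]
          simp
        simp_rw [hprod]
        rw [← Equiv.sum_comp (Equiv.mulRight τ)
          (fun σ => ((Equiv.Perm.sign σ : ℤ) : ℝ) * ((Equiv.Perm.sign τ : ℤ) : ℝ) *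
            ∏ i, (∑ s : α, w s * φ (σ (τ⁻¹ i)) s * φ i s))]
        rw [Matrix.det_apply']
        refine Finset.sum_congr rfl fun σ _ => ?_
        have h1 : ∀ i, (σ * τ : Equiv.Perm (Fin n)) (τ⁻¹ i) = σ i := by
          intro i; simp [Equiv.Perm.mul_apply]
        have h2 : ((Equiv.Perm.sign (σ * τ) : ℤ) : ℝ) * ((Equiv.Perm.sign τ : ℤ) : ℝ)
            = ((Equiv.Perm.sign σ : ℤ) : ℝ) := by
          rw [Equiv.Perm.sign_mul]
          push_cast
          rcases Int.units_eq_one_or (Equiv.Perm.sign τ) with h | h <;> simp [h]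
        simp only [Equiv.coe_mulRight, h1, h2]
        rfl
      simp_rw [hτ]
      rw [Finset.sum_const, Finset.card_univ, Fintype.card_perm, Fintype.card_fin, nsmul_eq_mul]

/-- binomial-type weight `1/(m! (L-m)!)` on `0 ≤ m ≤ L`, as a function on `ℤ`. -/
noncomputable def bw (L : ℕ) (m : ℤ) : ℝ :=
  if 0 ≤ m ∧ m ≤ L then (((m.toNat).factorial * (L - m.toNat).factorial : ℕ) : ℝ)⁻¹ else 0

/-- `descPochhammer` composed with `c - X`. -/
noncomputable def dq (c : ℝ) (m : ℕ) : Polynomial ℝ :=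
  (descPochhammer ℝ m).comp (Polynomial.C c - X)

/-- monic Krawtchouk-type polynomial of degree `2a` (p = 1/2, lattice `0..N`). -/
noncomputable def KP (N a : ℕ) : Polynomial ℝ :=
  Polynomial.C (((4:ℝ)^a)⁻¹) * ∑ j ∈ range (2*a+1),
    Polynomial.C ((-1:ℝ)^j * ((2*a).choose j)) * (descPochhammer ℝ j) * dq N (2*a-j)

lemma dq_eval (c : ℝ) (m : ℕ) (x : ℝ) : (dq c m).eval x = (descPochhammer ℝ m).eval (c - x) := by
  simp [dq, eval_comp]

lemma rodrigues_term (N a j : ℕ) (hj : j ≤ 2*a) (ha : 2*a ≤ N) (k : ℤ) :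
    bw N k * ((descPochhammer ℝ j).eval (k:ℝ) *
      (descPochhammer ℝ (2*a-j)).eval ((N:ℝ) - (k:ℝ))) = bw (N - 2*a) (k - j) := by
  by_cases hk : 0 ≤ k ∧ k ≤ N
  · obtain ⟨hk0, hkN⟩ := hk
    set κ := k.toNat with hκ
    have hkκ : (κ : ℤ) = k := Int.toNat_of_nonneg hk0
    have hκN : κ ≤ N := by omega
    have hev1 : ((k:ℝ)) = (κ : ℝ) := by exact_mod_cast congrArg (fun z : ℤ => (z : ℝ)) hkκ.symm
    have hev2 : ((N:ℝ) - (k:ℝ)) = ((N - κ : ℕ) : ℝ) := by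
      rw [hev1]; push_cast [Nat.cast_sub hκN]; ring
    rw [hev2, hev1, descPochhammer_eval_eq_descFactorial, descPochhammer_eval_eq_descFactorial]
    have hbwN : bw N k = ((κ.factorial * (N - κ).factorial : ℕ) : ℝ)⁻¹ := by
      rw [bw, if_pos ⟨hk0, hkN⟩]
    rw [hbwN]
    by_cases hjκ : j ≤ κ
    · by_cases hrest : 2*a - j ≤ N - κ
      · have hcond : 0 ≤ k - j ∧ k - j ≤ ((N - 2*a : ℕ) : ℤ) := by
          constructor <;> [omega; (push_cast; omega)]
        have htn : (k - j).toNat = κ - j := by omega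
        rw [bw, if_pos hcond, htn]
        have e1 : (κ - j).factorial * κ.descFactorial j = κ.factorial :=
          Nat.factorial_mul_descFactorial hjκ
        have e2 : ((N - κ) - (2*a - j)).factorial * (N - κ).descFactorial (2*a - j)
            = (N - κ).factorial := Nat.factorial_mul_descFactorial hrest
        have e3 : (N - 2*a) - (κ - j) = (N - κ) - (2*a - j) := by omega
        rw [e3]
        have E1 : ((κ - j).factorial : ℝ) * (κ.descFactorial j : ℝ) = (κ.factorial : ℝ) := by
          exact_mod_cast e1
        have E2 : (((N - κ) - (2*a - j)).factorial : ℝ) * ((N - κ).descFactorial (2*a - j) : ℝ)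
            = ((N - κ).factorial : ℝ) := by exact_mod_cast e2
        have h1 : ((κ - j).factorial : ℝ) ≠ 0 := by
          exact_mod_cast Nat.factorial_ne_zero _
        have h2 : ((((N - κ) - (2*a - j)).factorial : ℕ) : ℝ) ≠ 0 := by
          exact_mod_cast Nat.factorial_ne_zero _
        have h3 : ((κ.descFactorial j : ℕ) : ℝ) ≠ 0 := by
          have : κ.descFactorial j ≠ 0 := by
            intro h0
            exact absurd (Nat.descFactorial_eq_zero_iff_lt.1 h0) (by omega)
          exact_mod_cast this
        have h4 : (((N - κ).descFactorial (2*a - j) : ℕ) : ℝ) ≠ 0 := by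
          have : (N - κ).descFactorial (2*a - j) ≠ 0 := by
            intro h0
            exact absurd (Nat.descFactorial_eq_zero_iff_lt.1 h0) (by omega)
          exact_mod_cast this
        push_cast
        rw [← E1, ← E2]
        field_simp
      · have hz : (N - κ).descFactorial (2*a - j) = 0 :=
          Nat.descFactorial_eq_zero_iff_lt.2 (by omega)
        rw [hz]
        rw [bw, if_neg (by omega)]
        simp
    · have hz : κ.descFactorial j = 0 := Nat.descFactorial_eq_zero_iff_lt.2 (by omega)
      rw [hz]
      rw [bw, if_neg (by omega)]
      simp
  · rw [bw, if_neg hk]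
    rw [bw, if_neg (by omega)]
    simp

lemma rodrigues (N a : ℕ) (ha : 2*a ≤ N) (k : ℤ) :
    bw N k * (KP N a).eval (k:ℝ)
    = ((4:ℝ)^a)⁻¹ * ∑ j ∈ range (2*a+1),
        (-1:ℝ)^j * ((2*a).choose j) * bw (N - 2*a) (k - j) := by
  rw [KP, eval_mul, eval_C, eval_finset_sum]
  rw [← mul_assoc, mul_comm (bw N k), mul_assoc, Finset.mul_sum]
  congr 1
  refine Finset.sum_congr rfl fun j hj => ?_
  rw [Finset.mem_range] at hj
  rw [eval_mul, eval_mul, eval_C, dq_eval]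
  rw [← rodrigues_term N a j (by omega) ha k]
  ring

lemma natDegree_dq (c : ℝ) (m : ℕ) : (dq c m).natDegree = m := by
  rw [dq, natDegree_comp, descPochhammer_natDegree]
  have : (Polynomial.C c - X : Polynomial ℝ) = -(X - Polynomial.C c) := by ring
  rw [this, natDegree_neg, natDegree_X_sub_C, mul_one]

lemma leadingCoeff_dq (c : ℝ) (m : ℕ) : (dq c m).leadingCoeff = (-1)^m := by
  rcases Nat.eq_zero_or_pos m with rfl | hm
  · simp [dq, descPochhammer_zero]
  · rw [dq, leadingCoeff_comp]
    · rw [(monic_descPochhammer ℝ m).leadingCoeff, descPochhammer_natDegree, one_mul]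
      congr 1
      have : (Polynomial.C c - X : Polynomial ℝ) = -(X - Polynomial.C c) := by ring
      rw [this, leadingCoeff_neg, Monic.leadingCoeff (monic_X_sub_C c)]
    · have : (Polynomial.C c - X : Polynomial ℝ) = -(X - Polynomial.C c) := by ring
      rw [this, natDegree_neg, natDegree_X_sub_C]
      omega

lemma KP_coeff_top (N a : ℕ) : (KP N a).coeff (2*a) = 1 := by
  rw [KP, coeff_C_mul, finset_sum_coeff]
  have hterm : ∀ j ∈ range (2*a+1),
      (Polynomial.C ((-1:ℝ)^j * ((2*a).choose j)) * (descPochhammer ℝ j) * dq N (2*a-j)).coeff (2*a)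
      = ((2*a).choose j : ℝ) := by
    intro j hj
    rw [Finset.mem_range] at hj
    rw [mul_assoc, coeff_C_mul]
    have hc : (descPochhammer ℝ j * dq (N:ℝ) (2*a-j)).coeff (2*a) = (-1:ℝ)^(2*a-j) := by
      have h := coeff_mul_degree_add_degree (descPochhammer ℝ j) (dq (N:ℝ) (2*a-j))
      rw [descPochhammer_natDegree, natDegree_dq,
        (monic_descPochhammer ℝ j).leadingCoeff, leadingCoeff_dq, one_mul,
        show j + (2*a-j) = 2*a from by omega] at h
      exact h
    rw [hc]
    have hs : ((-1:ℝ))^j * ((-1:ℝ))^(2*a-j) = 1 := by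
      rw [← pow_add, show j + (2*a - j) = 2*a from by omega, pow_mul]
      norm_num
    calc (-1:ℝ)^j * ((2*a).choose j : ℝ) * ((-1:ℝ)^(2*a-j))
        = ((-1:ℝ)^j * (-1:ℝ)^(2*a-j)) * ((2*a).choose j : ℝ) := by ring
      _ = ((2*a).choose j : ℝ) := by rw [hs, one_mul]
  rw [Finset.sum_congr rfl hterm]
  have hsum : ∑ j ∈ range (2*a+1), (((2*a).choose j : ℕ) : ℝ) = (2:ℝ)^(2*a) := by
    rw [← Nat.cast_sum, Nat.sum_range_choose]
    push_cast
    ring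
  rw [hsum, show (4:ℝ)^a = 2^(2*a) from by rw [pow_mul]; norm_num]
  rw [inv_mul_cancel₀ (by positivity)]

lemma KP_natDegree_le (N a : ℕ) : (KP N a).natDegree ≤ 2*a := by
  rw [KP]
  refine le_trans (natDegree_mul_le) ?_
  rw [natDegree_C, zero_add]
  refine Polynomial.natDegree_sum_le_of_forall_le _ _ fun j hj => ?_
  rw [Finset.mem_range] at hj
  refine le_trans (natDegree_mul_le) ?_
  have h1 : (Polynomial.C ((-1:ℝ)^j * ((2*a).choose j)) * descPochhammer ℝ j).natDegree ≤ j := by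
    refine le_trans (natDegree_mul_le) ?_
    rw [natDegree_C, zero_add, descPochhammer_natDegree]
  rw [natDegree_dq]
  omega

lemma KP_monic (N a : ℕ) : (KP N a).Monic :=
  Polynomial.monic_of_natDegree_le_of_coeff_eq_one (2*a) (KP_natDegree_le N a) (KP_coeff_top N a)

lemma KP_natDegree (N a : ℕ) : (KP N a).natDegree = 2*a := by
  refine le_antisymm (KP_natDegree_le N a) ?_
  exact Polynomial.le_natDegree_of_ne_zero (by rw [KP_coeff_top]; norm_num)

lemma KP_symm (N a : ℕ) : (KP N a).comp (Polynomial.C (N:ℝ) - X) = KP N a := by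
  rw [KP, mul_comp, C_comp, Polynomial.sum_comp]
  congr 1
  have hterm : ∀ j, j ∈ range (2*a+1) →
      (Polynomial.C ((-1:ℝ)^j * ((2*a).choose j)) * descPochhammer ℝ j * dq N (2*a-j)).comp
        (Polynomial.C (N:ℝ) - X)
      = Polynomial.C ((-1:ℝ)^j * ((2*a).choose j)) * dq N j *
          ((descPochhammer ℝ (2*a-j)) : Polynomial ℝ) := by
    intro j hj
    rw [mul_comp, mul_comp, C_comp]
    have hdq : (dq (N:ℝ) (2*a-j)).comp (Polynomial.C (N:ℝ) - X) = descPochhammer ℝ (2*a-j) := by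
      rw [dq, comp_assoc]
      have : (Polynomial.C (N:ℝ) - X).comp (Polynomial.C (N:ℝ) - X) = X := by
        simp [sub_comp]
      rw [this, comp_X]
    rw [hdq]
    rfl
  rw [Finset.sum_congr rfl hterm]
  rw [← Finset.sum_range_reflect]
  refine Finset.sum_congr rfl fun j hj => ?_
  rw [Finset.mem_range] at hj
  have h1 : 2*a + 1 - 1 - j = 2*a - j := by omega
  have h2 : 2*a - (2*a - j) = j := by omega
  have h3 : (2*a).choose (2*a-j) = (2*a).choose j := Nat.choose_symm (by omega)
  have h4 : ((-1:ℝ))^(2*a-j) = (-1:ℝ)^j := by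
    have : ((-1:ℝ))^(2*a-j) * ((-1:ℝ))^j = 1 := by
      rw [← pow_add, show 2*a - j + j = 2*a from by omega, pow_mul]; norm_num
    have hj2 : ((-1:ℝ))^j * ((-1:ℝ))^j = 1 := by
      rw [← pow_add, ← two_mul, pow_mul]; norm_num
    calc ((-1:ℝ))^(2*a-j) = ((-1:ℝ))^(2*a-j) * (((-1:ℝ))^j * ((-1:ℝ))^j) := by rw [hj2, mul_one]
      _ = (((-1:ℝ))^(2*a-j) * ((-1:ℝ))^j) * ((-1:ℝ))^j := by ring
      _ = ((-1:ℝ))^j := by rw [this, one_mul]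
  rw [h1, h2, h3, h4]
  ring

lemma coeff_comp_neg_X (p : Polynomial ℝ) (i : ℕ) :
    (p.comp (-X)).coeff i = (-1)^i * p.coeff i := by
  conv_lhs => rw [p.as_sum_range' (p.natDegree+1) (Nat.lt_succ_self _), Polynomial.sum_comp]
  rw [finset_sum_coeff]
  have hterm : ∀ k ∈ range (p.natDegree+1),
      ((monomial k (p.coeff k)).comp (-X)).coeff i
        = if k = i then (-1)^k * p.coeff k else 0 := by
    intro k _
    rw [monomial_comp]
    have hX : (-X : Polynomial ℝ)^k = Polynomial.C ((-1)^k) * X^k := by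
      rw [show (-X : Polynomial ℝ) = Polynomial.C (-1) * X from by simp, mul_pow, ← C_pow]
    rw [hX, ← mul_assoc, ← C_mul, coeff_C_mul, coeff_X_pow]
    by_cases h : k = i
    · subst h; simp [mul_comm]
    · rw [if_neg (fun h' : i = k => h h'.symm), if_neg h, mul_zero]
  rw [Finset.sum_congr rfl hterm]
  by_cases hi : i ≤ p.natDegree
  · rw [Finset.sum_eq_single_of_mem i (Finset.mem_range.2 (by omega)) (fun k _ hk => by simp [hk])]
    simp
  · rw [Finset.sum_eq_zero (fun k hk => by rw [Finset.mem_range] at hk; rw [if_neg (by omega)])]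
    rw [Polynomial.coeff_eq_zero_of_natDegree_lt (by omega), mul_zero]

lemma exists_even_rep (c : ℝ) (p : Polynomial ℝ) (a : ℕ)
    (hsym : p.comp (Polynomial.C (2*c) - X) = p) (hdeg : p.natDegree = 2*a) (hmon : p.Monic) :
    ∃ r : Polynomial ℝ, r.Monic ∧ r.natDegree = a ∧ p = r.comp ((X - Polynomial.C c)^2) := by
  set u := p.comp (X + Polynomial.C c) with hu
  have hudeg : u.natDegree = 2*a := by
    rw [hu, natDegree_comp, natDegree_X_add_C, mul_one, hdeg]
  have humonic : u.Monic := by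
    have h := Polynomial.leadingCoeff_comp (p := p) (q := X + Polynomial.C c)
      (by rw [natDegree_X_add_C]; omega)
    rw [hmon.leadingCoeff, (monic_X_add_C c).leadingCoeff, one_pow, one_mul] at h
    exact h
  have huneg : u.comp (-X) = u := by
    have h2 : p.comp ((Polynomial.C (2*c) - X).comp (X + Polynomial.C c)) = u := by
      rw [← comp_assoc, hsym]
    have h3 : (Polynomial.C (2*c) - X).comp (X + Polynomial.C c) = Polynomial.C c - X := by
      rw [sub_comp, C_comp, X_comp]
      rw [show (2*c : ℝ) = c + c from by ring, Polynomial.C_add]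
      ring
    have h4 : (X + Polynomial.C c).comp (-X : Polynomial ℝ) = Polynomial.C c - X := by
      rw [add_comp, C_comp, X_comp]
      ring
    rw [hu, comp_assoc, h4, ← h3, h2]
  have hodd : ∀ i, ¬ (2 ∣ i) → u.coeff i = 0 := by
    intro i hi
    have h := congrArg (fun q => Polynomial.coeff q i) huneg
    simp only [coeff_comp_neg_X] at h
    have hneg : ((-1:ℝ))^i = -1 := Odd.neg_one_pow (Nat.odd_iff.2 (by omega))
    rw [hneg] at h
    linarith
  set r := ∑ i ∈ range (a+1), Polynomial.C (u.coeff (2*i)) * X^i with hr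
  have hrc : ∀ m, r.coeff m = if m ≤ a then u.coeff (2*m) else 0 := by
    intro m
    rw [hr, finset_sum_coeff]
    have hterm : ∀ i ∈ range (a+1),
        (Polynomial.C (u.coeff (2*i)) * X^i).coeff m
          = if i = m then u.coeff (2*i) else 0 := by
      intro i _
      rw [coeff_C_mul, coeff_X_pow]
      by_cases h : i = m
      · subst h; simp
      · rw [if_neg (fun h' : m = i => h h'.symm), if_neg h, mul_zero]
    rw [Finset.sum_congr rfl hterm]
    by_cases hm : m ≤ a
    · rw [Finset.sum_eq_single_of_mem m (Finset.mem_range.2 (by omega))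
        (fun k _ hk => by simp [hk])]
      simp [hm]
    · rw [Finset.sum_eq_zero (fun k hk => by rw [Finset.mem_range] at hk; rw [if_neg (by omega)])]
      simp [hm]
  have hra : r.coeff a = 1 := by
    rw [hrc, if_pos le_rfl]
    have := humonic.coeff_natDegree
    rwa [hudeg] at this
  have hrdeg : r.natDegree ≤ a :=
    Polynomial.natDegree_le_iff_coeff_eq_zero.2 fun m hm => by rw [hrc, if_neg (by omega)]
  have hrmonic : r.Monic := Polynomial.monic_of_natDegree_le_of_coeff_eq_one a hrdeg hra
  have hrdeg' : r.natDegree = a :=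
    le_antisymm hrdeg (Polynomial.le_natDegree_of_ne_zero (by rw [hra]; norm_num))
  have hr2 : r.comp (X^2) = u := by
    ext j
    rw [hr, Polynomial.sum_comp, finset_sum_coeff]
    have hterm : ∀ i ∈ range (a+1),
        ((Polynomial.C (u.coeff (2*i)) * X^i).comp (X^2)).coeff j
          = if 2*i = j then u.coeff (2*i) else 0 := by
      intro i _
      rw [mul_comp, C_comp, pow_comp, X_comp, ← pow_mul, coeff_C_mul, coeff_X_pow]
      by_cases h : 2*i = j
      · rw [if_pos (by omega), if_pos h, mul_one]
      · rw [if_neg (fun h' : j = 2*i => h h'.symm), if_neg h, mul_zero]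
    rw [Finset.sum_congr rfl hterm]
    by_cases hj : 2 ∣ j
    · obtain ⟨i0, rfl⟩ := hj
      by_cases hi0 : i0 ≤ a
      · rw [Finset.sum_eq_single_of_mem i0 (Finset.mem_range.2 (by omega))
          (fun k _ hk => by rw [if_neg (by omega)])]
        simp
      · rw [Finset.sum_eq_zero (fun k hk => by rw [Finset.mem_range] at hk; rw [if_neg (by omega)])]
        exact (Polynomial.coeff_eq_zero_of_natDegree_lt (by omega)).symm
    · rw [Finset.sum_eq_zero (fun k hk => by rw [if_neg (by omega)])]
      exact (hodd j hj).symm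
  have hup : u.comp (X - Polynomial.C c) = p := by
    rw [hu, comp_assoc, add_comp, X_comp, C_comp]
    simp
  refine ⟨r, hrmonic, hrdeg', ?_⟩
  rw [← hup, ← hr2, comp_assoc, pow_comp, X_comp]

open scoped fwdDiff

lemma bw_eq_zero {L : ℕ} {m : ℤ} (h : ¬(0 ≤ m ∧ m ≤ L)) : bw L m = 0 := by
  rw [bw, if_neg h]

lemma bw_sum (L : ℕ) : ∑ m ∈ Finset.Icc (0:ℤ) L, bw L m = (2:ℝ)^L / (L.factorial : ℝ) := by
  rw [show ∑ m ∈ Finset.Icc (0:ℤ) L, bw L m = ∑ k ∈ range (L+1), bw L k from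
    Finset.sum_nbij' (fun m => m.toNat) (fun k => (k:ℤ))
      (by intro m hm; simp only [Finset.mem_Icc] at hm; simp only [Finset.mem_range]; omega)
      (by intro k hk; simp only [Finset.mem_range] at hk; simp only [Finset.mem_Icc]; omega)
      (by intro m hm; simp only [Finset.mem_Icc] at hm
          show ((m.toNat : ℤ)) = m; omega)
      (by intro k hk; show ((k:ℤ)).toNat = k; omega)
      (by intro m hm; simp only [Finset.mem_Icc] at hm
          show bw L m = bw L ((m.toNat : ℤ))
          rw [show ((m.toNat : ℤ)) = m from by omega])]
  have hterm : ∀ k ∈ range (L+1), bw L (k:ℤ) = ((L.choose k : ℕ) : ℝ) / (L.factorial : ℝ) := by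
    intro k hk
    rw [Finset.mem_range] at hk
    rw [bw, if_pos (by omega)]
    rw [show ((k:ℤ)).toNat = k from by omega]
    rw [Nat.cast_choose ℝ (by omega : k ≤ L)]
    have h1 : ((k.factorial : ℕ) : ℝ) ≠ 0 := by exact_mod_cast Nat.factorial_ne_zero k
    have h2 : (((L-k).factorial : ℕ) : ℝ) ≠ 0 := by exact_mod_cast Nat.factorial_ne_zero (L-k)
    have h3 : ((L.factorial : ℕ) : ℝ) ≠ 0 := by exact_mod_cast Nat.factorial_ne_zero L
    push_cast
    field_simp
  rw [Finset.sum_congr rfl hterm, ← Finset.sum_div, ← Nat.cast_sum, Nat.sum_range_choose]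
  push_cast
  ring

lemma neg_one_pow_flip (a j : ℕ) (hj : j ≤ 2*a) : ((-1:ℝ))^(2*a-j) = (-1)^j := by
  have h1 : ((-1:ℝ))^(2*a-j) * ((-1:ℝ))^j = 1 := by
    rw [← pow_add, show 2*a - j + j = 2*a from by omega, pow_mul]; norm_num
  have h2 : ((-1:ℝ))^j * ((-1:ℝ))^j = 1 := by
    rw [← pow_add, ← two_mul, pow_mul]; norm_num
  calc ((-1:ℝ))^(2*a-j) = ((-1:ℝ))^(2*a-j) * (((-1:ℝ))^j * ((-1:ℝ))^j) := by rw [h2, mul_one]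
    _ = (((-1:ℝ))^(2*a-j) * ((-1:ℝ))^j) * ((-1:ℝ))^j := by ring
    _ = ((-1:ℝ))^j := by rw [h1, one_mul]

lemma fwdDiff_sum_eq (a : ℕ) (g : ℤ → ℝ) (m : ℤ) :
    ∑ j ∈ range (2*a+1), (-1:ℝ)^j * ((2*a).choose j : ℝ) * g (m + j)
      = (Δ_[(1:ℤ)])^[2*a] g m := by
  rw [fwdDiff_iter_eq_sum_shift]
  refine Finset.sum_congr rfl fun j hj => ?_
  rw [Finset.mem_range] at hj
  rw [zsmul_eq_mul]
  push_cast
  rw [neg_one_pow_flip a j (by omega)]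
  rw [show (m + j • (1:ℤ)) = m + j from by simp]

lemma orth_full (N a b : ℕ) (ha : 2*a ≤ N) (hb : b ≤ a) :
    ∑ k ∈ Finset.Icc (0:ℤ) (N:ℤ), bw N k * ((KP N a).eval (k:ℝ) * (KP N b).eval (k:ℝ))
    = if b = a then
        ((4:ℝ)^a)⁻¹ * ((2*a).factorial : ℝ) * ((2:ℝ)^(N-2*a) / ((N-2*a).factorial : ℝ))
      else 0 := by
  set L := N - 2*a with hL
  set g : ℤ → ℝ := fun k => (KP N b).eval (k:ℝ) with hg
  have step1 : ∑ k ∈ Finset.Icc (0:ℤ) (N:ℤ), bw N k * ((KP N a).eval (k:ℝ) * (KP N b).eval (k:ℝ))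
      = ((4:ℝ)^a)⁻¹ * ∑ j ∈ range (2*a+1), (-1:ℝ)^j * ((2*a).choose j : ℝ) *
          (∑ m ∈ Finset.Icc (0:ℤ) (L:ℤ), bw L m * g (m + j)) := by
    have h1 : ∀ k ∈ Finset.Icc (0:ℤ) (N:ℤ),
        bw N k * ((KP N a).eval (k:ℝ) * (KP N b).eval (k:ℝ))
        = ((4:ℝ)^a)⁻¹ * ∑ j ∈ range (2*a+1),
            (-1:ℝ)^j * ((2*a).choose j : ℝ) * (bw L (k - j) * g k) := by
      intro k _
      have h := rodrigues N a ha k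
      rw [show bw N k * ((KP N a).eval (k:ℝ) * (KP N b).eval (k:ℝ))
          = (bw N k * (KP N a).eval (k:ℝ)) * g k from by rw [hg]; ring, h, mul_assoc,
        Finset.sum_mul]
      congr 1
      exact Finset.sum_congr rfl fun j _ => by rw [hL]; ring
    rw [Finset.sum_congr rfl h1, ← Finset.mul_sum]
    congr 1
    rw [Finset.sum_comm]
    refine Finset.sum_congr rfl fun j hj => ?_
    rw [Finset.mem_range] at hj
    rw [← Finset.mul_sum]
    congr 1
    rw [show ∑ k ∈ Finset.Icc (0:ℤ) (N:ℤ), bw L (k - j) * g k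
        = ∑ k ∈ Finset.Icc (j:ℤ) ((L:ℤ) + j), bw L (k - j) * g k from
      (Finset.sum_subset
        (by intro k hk; simp only [Finset.mem_Icc] at hk ⊢; omega)
        (by intro k hk1 hk2
            simp only [Finset.mem_Icc] at hk1 hk2
            rw [bw_eq_zero (by omega), zero_mul])).symm]
    refine Finset.sum_nbij' (fun k => k - j) (fun m => m + j)
      (by intro k hk; simp only [Finset.mem_Icc] at hk ⊢; omega)
      (by intro m hm; simp only [Finset.mem_Icc] at hm ⊢; omega)
      (by intro k _; show k - j + j = k; ring)
      (by intro m _; show m + j - j = m; ring)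
      (by intro k _; show bw L (k - j) * g k = bw L (k - j) * g (k - j + j)
          rw [sub_add_cancel])
  have hΔ := fwdDiff_iter_eval (2*a) (KP N b) (by rw [KP_natDegree]; omega)
  have step2 : ∑ j ∈ range (2*a+1), (-1:ℝ)^j * ((2*a).choose j : ℝ) *
          (∑ m ∈ Finset.Icc (0:ℤ) (L:ℤ), bw L m * g (m + j))
      = ∑ m ∈ Finset.Icc (0:ℤ) (L:ℤ), bw L m *
          (((2*a).factorial : ℝ) * (KP N b).coeff (2*a)) := by
    simp_rw [Finset.mul_sum]
    rw [Finset.sum_comm]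
    refine Finset.sum_congr rfl fun m _ => ?_
    have h2 : ∀ j ∈ range (2*a+1),
        (-1:ℝ)^j * ((2*a).choose j : ℝ) * (bw L m * g (m + j))
        = bw L m * ((-1:ℝ)^j * ((2*a).choose j : ℝ) * g (m + j)) := fun j _ => by ring
    rw [Finset.sum_congr rfl h2, ← Finset.mul_sum]
    congr 1
    rw [fwdDiff_sum_eq a g m, hΔ]
  rw [step1, step2]
  rcases eq_or_ne b a with rfl | hne
  · rw [if_pos rfl, KP_coeff_top, mul_one, ← Finset.sum_mul, bw_sum]
    ring
  · rw [if_neg hne]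
    have hc : (KP N b).coeff (2*a) = 0 :=
      Polynomial.coeff_eq_zero_of_natDegree_lt (by rw [KP_natDegree]; omega)
    rw [hc]
    simp

lemma bw_symm (L : ℕ) (k : ℤ) : bw L ((L:ℤ) - k) = bw L k := by
  by_cases h : 0 ≤ k ∧ k ≤ L
  · rw [bw, if_pos (by omega), bw, if_pos h]
    have e1 : ((L:ℤ) - k).toNat = L - k.toNat := by omega
    have e2 : L - (L - k.toNat) = k.toNat := by omega
    rw [e1, e2, Nat.mul_comm]
  · rw [bw_eq_zero (by omega), bw_eq_zero h]

lemma KP_eval_symm (N a : ℕ) (x : ℝ) : (KP N a).eval ((N:ℝ) - x) = (KP N a).eval x := by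
  conv_rhs => rw [← KP_symm N a]
  rw [eval_comp, eval_sub, eval_C, eval_X]

lemma half_sum (M : ℕ) (F : ℤ → ℝ) (hsym : ∀ k : ℤ, F (2*M+1 - k) = F k) :
    ∑ k ∈ Finset.Icc (0:ℤ) ((2*M+1 : ℕ) : ℤ), F k
    = 2 * ∑ s ∈ Finset.Icc (1:ℕ) (M+1), F ((M:ℤ) + (s:ℤ)) := by
  have hsplit : Finset.Icc (0:ℤ) ((2*M+1 : ℕ) : ℤ)
      = Finset.Icc (0:ℤ) (M:ℤ) ∪ Finset.Icc ((M:ℤ)+1) ((2*M+1 : ℕ) : ℤ) := by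
    ext k
    simp only [Finset.mem_Icc, Finset.mem_union]
    omega
  have hdisj : Disjoint (Finset.Icc (0:ℤ) (M:ℤ)) (Finset.Icc ((M:ℤ)+1) ((2*M+1:ℕ) : ℤ)) := by
    rw [Finset.disjoint_left]
    intro k h1 h2
    simp only [Finset.mem_Icc] at h1 h2
    omega
  rw [hsplit, Finset.sum_union hdisj]
  have h1 : ∑ k ∈ Finset.Icc (0:ℤ) (M:ℤ), F k
      = ∑ k ∈ Finset.Icc ((M:ℤ)+1) ((2*M+1:ℕ):ℤ), F k :=
    Finset.sum_nbij' (fun k => 2*M+1 - k) (fun k => 2*M+1 - k)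
      (by intro k hk; simp only [Finset.mem_Icc] at hk ⊢; omega)
      (by intro k hk; simp only [Finset.mem_Icc] at hk ⊢; omega)
      (by intro k _; show 2*(M:ℤ)+1 - (2*M+1 - k) = k; ring)
      (by intro k _; show 2*(M:ℤ)+1 - (2*M+1 - k) = k; ring)
      (by intro k _
          show F k = F (2*(M:ℤ)+1 - k)
          rw [show (2*(M:ℤ)+1 - k) = ((2*M+1 : ℕ) : ℤ) - k from by push_cast; ring]
          rw [show ((2*M+1 : ℕ) : ℤ) - k = 2*(M:ℤ)+1 - k from by push_cast; ring, hsym k])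
  have h2 : ∑ k ∈ Finset.Icc ((M:ℤ)+1) ((2*M+1:ℕ):ℤ), F k
      = ∑ s ∈ Finset.Icc (1:ℕ) (M+1), F ((M:ℤ) + (s:ℤ)) :=
    Finset.sum_nbij' (fun k => (k - M).toNat) (fun s => (M:ℤ) + s)
      (by intro k hk; simp only [Finset.mem_Icc] at hk ⊢; omega)
      (by intro s hs; simp only [Finset.mem_Icc] at hs ⊢; push_cast; omega)
      (by intro k hk; simp only [Finset.mem_Icc] at hk; show (M:ℤ) + ((k - M).toNat : ℤ) = k; omega)
      (by intro s hs; simp only [Finset.mem_Icc] at hs; show (((M:ℤ) + s - M).toNat) = s; omega)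
      (by intro k hk; simp only [Finset.mem_Icc] at hk
          show F k = F ((M:ℤ) + ((k - M).toNat : ℤ))
          rw [show (M:ℤ) + ((k - M).toNat : ℤ) = k from by omega])
  rw [h1, h2]
  ring


/-- For integers `M ≥ 0` and `1 ≤ n ≤ M+1`:
`∑_{x₁,…,x_n=1}^{M+1} ∏ᵢ 1/((M+xᵢ)!(M+1-xᵢ)!) ⬝
  (∏_{i<j}((xᵢ-1/2)² - (xⱼ-1/2)²))²
  = n! ⬝ 2^{2Mn} ⬝ ∏_{j=0}^{n-1} (2j)!/(2^{4j}(2(M-j)+1)!)`. -/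
theorem stmt_16 (M n : ℕ) (hn : 1 ≤ n) (hnM : n ≤ M + 1) :
    ∑ x : Fin n → {t : ℕ // t ∈ Finset.Icc 1 (M + 1)},
      (∏ i : Fin n,
        (1 : ℝ) / ((Nat.factorial (M + (x i : ℕ)) * Nat.factorial (M + 1 - (x i : ℕ)) : ℕ) : ℝ)) *
        (∏ i : Fin n, ∏ j : Fin n, if i < j then
          (((x i : ℕ) : ℝ) - 1 / 2) ^ 2 - (((x j : ℕ) : ℝ) - 1 / 2) ^ 2 else 1) ^ 2
    = (Nat.factorial n : ℝ) * (2 : ℝ) ^ (2 * M * n) *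
        ∏ j ∈ Finset.range n,
          ((Nat.factorial (2 * j) : ℝ) /
            ((2 : ℝ) ^ (4 * j) * (Nat.factorial (2 * (M - j) + 1) : ℝ))) := by
  classical
  have hjM : ∀ j : Fin n, (j:ℕ) ≤ M := fun j => Nat.lt_succ_iff.mp (lt_of_lt_of_le j.isLt hnM)
  have hex : ∀ j : ℕ, j ≤ M → ∃ r : Polynomial ℝ, r.Monic ∧ r.natDegree = j ∧
      KP (2*M+1) j = r.comp ((X - Polynomial.C (((2*M+1 : ℕ):ℝ)/2))^2) := by
    intro j hj
    refine exists_even_rep (((2*M+1:ℕ):ℝ)/2) (KP (2*M+1) j) j ?_ (KP_natDegree _ j) (KP_monic _ j)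
    rw [show (2 * (((2*M+1:ℕ):ℝ)/2)) = ((2*M+1:ℕ):ℝ) from by ring]
    exact KP_symm (2*M+1) j
  set R : Fin n → Polynomial ℝ := fun j => Classical.choose (hex j (hjM j)) with hRdef
  have hRspec : ∀ j : Fin n, (R j).Monic ∧ (R j).natDegree = (j:ℕ) ∧
      KP (2*M+1) j = (R j).comp ((X - Polynomial.C (((2*M+1 : ℕ):ℝ)/2))^2) :=
    fun j => Classical.choose_spec (hex j (hjM j))
  set α := {t : ℕ // t ∈ Finset.Icc 1 (M + 1)} with hα
  set w : α → ℝ := fun s =>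
    (1 : ℝ) / ((Nat.factorial (M + (s : ℕ)) * Nat.factorial (M + 1 - (s : ℕ)) : ℕ) : ℝ) with hw
  set y : α → ℝ := fun s => (((s : ℕ) : ℝ) - 1/2)^2 with hy
  set φ : Fin n → α → ℝ := fun j s => (R j).eval (y s) with hφ
  -- Step A: rewrite the squared product as a squared determinant
  have stepA : ∀ x : Fin n → α,
      (∏ i : Fin n, ∏ j : Fin n, if i < j then
          (((x i : ℕ) : ℝ) - 1 / 2) ^ 2 - (((x j : ℕ) : ℝ) - 1 / 2) ^ 2 else 1) ^ 2
      = (Matrix.det (Matrix.of fun i j : Fin n => φ j (x i)))^2 := by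
    intro x
    set v : Fin n → ℝ := fun i => y (x i) with hv
    have hdet : Matrix.det (Matrix.vandermonde v)
        = Matrix.det (Matrix.of fun i j : Fin n => φ j (x i)) := by
      have := Matrix.det_eval_matrixOfPolynomials_eq_det_vandermonde v R
        (fun j => (hRspec j).2.1) (fun j => (hRspec j).1)
      exact this
    rw [← hdet, Matrix.det_vandermonde]
    rw [← Finset.prod_pow, ← Finset.prod_pow]
    have : ∀ i : Fin n,
        (∏ j : Fin n, if i < j then
          (((x i : ℕ) : ℝ) - 1 / 2) ^ 2 - (((x j : ℕ) : ℝ) - 1 / 2) ^ 2 else 1) ^ 2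
        = (∏ j ∈ Finset.Ioi i, (v j - v i)) ^ 2 := by
      intro i
      rw [← Finset.prod_filter (fun j => i < j)
        (fun j => (((x i : ℕ) : ℝ) - 1 / 2) ^ 2 - (((x j : ℕ) : ℝ) - 1 / 2) ^ 2)]
      rw [show Finset.filter (fun j => i < j) Finset.univ = Finset.Ioi i from by
        ext j; simp [Finset.mem_Ioi]]
      rw [← Finset.prod_pow, ← Finset.prod_pow]
      refine Finset.prod_congr rfl fun j _ => ?_
      rw [hv, hy]
      ring
    rw [Finset.prod_congr rfl (fun i _ => this i)]
  rw [Finset.sum_congr rfl (fun x _ => by rw [stepA x])]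
  rw [andreief n w φ]
  set c : Fin n → ℝ := fun a =>
    (2:ℝ)^(2*M) * ((2*(a:ℕ)).factorial : ℝ) /
      ((2:ℝ)^(4*(a:ℕ)) * ((2*(M-(a:ℕ))+1).factorial : ℝ)) with hc
  have hGsum : ∀ a b : Fin n, (∑ s : α, w s * φ a s * φ b s)
      = (1/2 : ℝ) * ∑ k ∈ Finset.Icc (0:ℤ) ((2*M+1:ℕ):ℤ),
          bw (2*M+1) k *
            ((KP (2*M+1) (a:ℕ)).eval (k:ℝ) * (KP (2*M+1) (b:ℕ)).eval (k:ℝ)) := by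
    intro a b
    have hsymF : ∀ k : ℤ, bw (2*M+1) (2*(M:ℤ)+1 - k) *
          ((KP (2*M+1) (a:ℕ)).eval ((2*(M:ℤ)+1 - k : ℤ):ℝ) *
            (KP (2*M+1) (b:ℕ)).eval ((2*(M:ℤ)+1 - k : ℤ):ℝ))
        = bw (2*M+1) k *
          ((KP (2*M+1) (a:ℕ)).eval (k:ℝ) * (KP (2*M+1) (b:ℕ)).eval (k:ℝ)) := by
      intro k
      have h1 : (2*(M:ℤ)+1 - k) = ((2*M+1:ℕ):ℤ) - k := by push_cast; ring
      have h2 : ((((2*M+1:ℕ):ℤ) - k : ℤ) : ℝ) = ((2*M+1:ℕ):ℝ) - (k:ℝ) := by push_cast; ring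
      rw [h1, bw_symm, h2, KP_eval_symm, KP_eval_symm]
    have hbij : (∑ s : α, w s * φ a s * φ b s)
        = ∑ t ∈ Finset.Icc 1 (M+1), bw (2*M+1) ((M:ℤ) + (t:ℤ)) *
            ((KP (2*M+1) (a:ℕ)).eval ((((M:ℤ) + (t:ℤ) : ℤ)) : ℝ) *
             (KP (2*M+1) (b:ℕ)).eval ((((M:ℤ) + (t:ℤ) : ℤ)) : ℝ)) := by
      refine Finset.sum_bij' (fun (s : α) (_ : s ∈ Finset.univ) => (s : ℕ))
        (fun t ht => (⟨t, ht⟩ : α)) (fun s _ => s.2) (fun t _ => Finset.mem_univ _)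
        (fun s _ => rfl) (fun t _ => rfl) ?_
      intro s _
      have hs2 := s.2
      rw [Finset.mem_Icc] at hs2
      show w s * φ a s * φ b s = bw (2*M+1) ((M:ℤ) + ((s:ℕ):ℤ)) *
        ((KP (2*M+1) (a:ℕ)).eval ((((M:ℤ) + ((s:ℕ):ℤ) : ℤ)) : ℝ) *
         (KP (2*M+1) (b:ℕ)).eval ((((M:ℤ) + ((s:ℕ):ℤ) : ℤ)) : ℝ))
      have hbw : bw (2*M+1) ((M:ℤ) + ((s:ℕ):ℤ)) =
          (((Nat.factorial (M + (s:ℕ)) * Nat.factorial (M + 1 - (s:ℕ)) : ℕ)) : ℝ)⁻¹ := by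
        rw [bw, if_pos (by constructor <;> [omega; (push_cast; omega)])]
        rw [show ((M:ℤ) + ((s:ℕ):ℤ)).toNat = M + (s:ℕ) from by omega]
        rw [show 2*M+1 - (M + (s:ℕ)) = M + 1 - (s:ℕ) from by omega]
      have hKP : ∀ d : Fin n, (KP (2*M+1) (d:ℕ)).eval ((((M:ℤ) + ((s:ℕ):ℤ) : ℤ)) : ℝ)
          = φ d s := by
        intro d
        rw [hφ]
        simp only
        rw [(hRspec d).2.2, eval_comp, eval_pow, eval_sub, eval_X, eval_C, hy]
        congr 2
        push_cast
        ring
      rw [hKP a, hKP b, hbw, hw]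
      simp only
      rw [one_div]
      ring
    rw [hbij, half_sum M (fun k => bw (2*M+1) k *
        ((KP (2*M+1) (a:ℕ)).eval (k:ℝ) * (KP (2*M+1) (b:ℕ)).eval (k:ℝ))) hsymF]
    ring
  have hval : ∀ a : Fin n, (1/2 : ℝ) * (((4:ℝ)^(a:ℕ))⁻¹ * ((2*(a:ℕ)).factorial : ℝ) *
        ((2:ℝ)^(2*M+1-2*(a:ℕ)) / (((2*M+1-2*(a:ℕ)).factorial : ℕ) : ℝ))) = c a := by
    intro a
    have haM := hjM a
    have e : 2*M+1-2*(a:ℕ) = 2*(M-(a:ℕ))+1 := by omega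
    rw [e, hc]
    simp only
    have h2a : ((2:ℝ)^(2*(a:ℕ))) ≠ 0 := by positivity
    have h4 : (4:ℝ)^(a:ℕ) = (2:ℝ)^(2*(a:ℕ)) := by
      rw [pow_mul]; norm_num
    have h44 : (2:ℝ)^(4*(a:ℕ)) = (2:ℝ)^(2*(a:ℕ)) * (2:ℝ)^(2*(a:ℕ)) := by
      rw [← pow_add]; congr 1; omega
    have hp : (2:ℝ)^(2*(M-(a:ℕ))+1) = 2 * (2:ℝ)^(2*M) / (2:ℝ)^(2*(a:ℕ)) := by
      rw [eq_div_iff h2a, ← pow_add, show 2*(M-(a:ℕ))+1 + 2*(a:ℕ) = 2*M+1 from by omega,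
        pow_succ]
      ring
    have hD : (((2*(M-(a:ℕ))+1).factorial : ℕ) : ℝ) ≠ 0 := by
      exact_mod_cast Nat.factorial_ne_zero _
    rw [h4, h44, hp]
    field_simp
  have hdiag : (Matrix.of fun a b : Fin n => ∑ s : α, w s * φ a s * φ b s)
      = Matrix.diagonal c := by
    ext a b
    rw [Matrix.of_apply, Matrix.diagonal_apply]
    rcases le_or_gt (b:ℕ) (a:ℕ) with h | h
    · rw [hGsum a b, orth_full (2*M+1) (a:ℕ) (b:ℕ) (by have := hjM a; omega) h]
      by_cases hab : (b:ℕ) = (a:ℕ)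
      · rw [if_pos hab, if_pos (show a = b from Fin.ext hab.symm)]
        exact hval a
      · rw [if_neg hab, mul_zero, if_neg (fun h' : a = b => hab (by rw [h']))]
    · have hsw : (∑ s : α, w s * φ a s * φ b s) = ∑ s : α, w s * φ b s * φ a s :=
        Finset.sum_congr rfl fun s _ => by ring
      rw [hsw, hGsum b a, orth_full (2*M+1) (b:ℕ) (a:ℕ) (by have := hjM b; omega) (le_of_lt h)]
      rw [if_neg (by omega : ¬ (a:ℕ) = (b:ℕ)), mul_zero,
        if_neg (fun h' : a = b => by rw [h'] at h; omega)]
  rw [hdiag, Matrix.det_diagonal]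
  simp only [hc]
  rw [Fin.prod_univ_eq_prod_range (fun j => (2:ℝ)^(2*M) * ((2*j).factorial : ℝ) /
      ((2:ℝ)^(4*j) * (((2*(M-j)+1).factorial : ℕ) : ℝ))) n]
  have hsplit : ∀ j ∈ Finset.range n,
      (2:ℝ)^(2*M) * ((2*j).factorial : ℝ) / ((2:ℝ)^(4*j) * (((2*(M-j)+1).factorial : ℕ) : ℝ))
      = (2:ℝ)^(2*M) *
          (((2*j).factorial : ℝ) / ((2:ℝ)^(4*j) * (((2*(M-j)+1).factorial : ℕ) : ℝ))) := by
    intro j _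
    rw [mul_div_assoc]
  rw [Finset.prod_congr rfl hsplit, Finset.prod_mul_distrib, Finset.prod_const,
    Finset.card_range, ← pow_mul]
  ring
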